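/- (Converse / lower bound, Theorem 2) Let X, Y_{d_1}, …, Y_{d_K}, W, U be finite discrete random variables with W independent of (X, Y_{d_1}, …, Y_{d_K}), I(U; X) = 0, and H(Y_{d_1}, …, Y_{d_K} | W, U) = 0. Then H(U) ≥ max_{x : P(X=x)>0} H(Y_{d_1}, …, Y_{d_K} | X = x). -/

import Mathlib

open scoped BigOperators Classical

noncomputable section

/-- Probability of an event under a pmf `p` on a finite sample space. -/
def prE {Ω : Type*} [Fintype Ω] (p : Ω → ℝ) (E : Ω → Prop) : ℝ :=
  ∑ ω, if E ω then p ω else 0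

/-- `p` is a probability mass function. -/
def IsPMF {Ω : Type*} [Fintype Ω] (p : Ω → ℝ) : Prop :=
  (∀ ω, 0 ≤ p ω) ∧ ∑ ω, p ω = 1

/-- P(X = a). -/
def pr {Ω α : Type*} [Fintype Ω] (p : Ω → ℝ) (X : Ω → α) (a : α) : ℝ :=
  prE p (fun ω => X ω = a)

/-- Shannon entropy in bits. -/
def ent {Ω α : Type*} [Fintype Ω] [Fintype α] (p : Ω → ℝ) (X : Ω → α) : ℝ :=
  -∑ a, pr p X a * Real.logb 2 (pr p X a)

/-- Conditional entropy H(Y | X) = H(X,Y) - H(X). -/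
def condEnt {Ω α β : Type*} [Fintype Ω] [Fintype α] [Fintype β]
    (p : Ω → ℝ) (Y : Ω → β) (X : Ω → α) : ℝ :=
  ent p (fun ω => (X ω, Y ω)) - ent p X

/-- Mutual information I(X; Y). -/
def mi {Ω α β : Type*} [Fintype Ω] [Fintype α] [Fintype β]
    (p : Ω → ℝ) (X : Ω → α) (Y : Ω → β) : ℝ :=
  ent p X + ent p Y - ent p (fun ω => (X ω, Y ω))

/-- Conditional mutual information I(X; Y | Z). -/
def cmi {Ω α β γ : Type*} [Fintype Ω] [Fintype α] [Fintype β] [Fintype γ]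
    (p : Ω → ℝ) (X : Ω → α) (Y : Ω → β) (Z : Ω → γ) : ℝ :=
  ent p (fun ω => (X ω, Z ω)) + ent p (fun ω => (Y ω, Z ω))
    - ent p (fun ω => (X ω, Y ω, Z ω)) - ent p Z

/-- Independence of two random variables. -/
def IndepRV {Ω α β : Type*} [Fintype Ω] (p : Ω → ℝ) (X : Ω → α) (Y : Ω → β) : Prop :=
  ∀ a b, prE p (fun ω => X ω = a ∧ Y ω = b) = pr p X a * pr p Y b

/-- X is uniformly distributed on its (finite) alphabet. -/
def IsUniform {Ω α : Type*} [Fintype Ω] [Fintype α] (p : Ω → ℝ) (X : Ω → α) : Prop :=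
  ∀ a, pr p X a = 1 / (Fintype.card α : ℝ)

/-- Entropy of Y conditioned on the event E (e.g. {X = x}). -/
def entCondOn {Ω β : Type*} [Fintype Ω] [Fintype β] (p : Ω → ℝ) (Y : Ω → β)
    (E : Ω → Prop) : ℝ :=
  -∑ b, (prE p (fun ω => Y ω = b ∧ E ω) / prE p E) *
      Real.logb 2 (prE p (fun ω => Y ω = b ∧ E ω) / prE p E)

/-- PMF conditioned on the event E. -/
def pCond {Ω : Type*} [Fintype Ω] (p : Ω → ℝ) (E : Ω → Prop) (ω : Ω) : ℝ :=
  if E ω then p ω / prE p E else 0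

section Helpers

set_option linter.unusedSectionVars false
variable {Ω β γ : Type*} [Fintype Ω] [Fintype β] [Fintype γ] {p : Ω → ℝ}

/-- Natural-log entropy. -/
def entL (p : Ω → ℝ) (Z : Ω → β) : ℝ := -∑ b, pr p Z b * Real.log (pr p Z b)

lemma prE_congr {E F : Ω → Prop} (h : ∀ ω, E ω ↔ F ω) : prE p E = prE p F :=
  Finset.sum_congr rfl fun ω _ => if_congr (h ω) rfl rfl

lemma prE_nonneg (hp : ∀ ω, 0 ≤ p ω) (E : Ω → Prop) : 0 ≤ prE p E :=
  Finset.sum_nonneg fun ω _ => by by_cases h : E ω <;> simp [h, hp ω]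

lemma pr_nonneg (hp : ∀ ω, 0 ≤ p ω) (Z : Ω → β) (b : β) : 0 ≤ pr p Z b :=
  prE_nonneg hp _

lemma le_prE (hp : ∀ ω, 0 ≤ p ω) {E : Ω → Prop} {ω : Ω} (hE : E ω) : p ω ≤ prE p E := by
  classical
  refine Finset.single_le_sum (f := fun ω => if E ω then p ω else 0)
    (fun i _ => ?_) (Finset.mem_univ ω) |>.trans_eq' (by simp [hE])
  by_cases h : E i <;> simp [h, hp i]

lemma prE_pos_exists (hp : ∀ ω, 0 ≤ p ω) {E : Ω → Prop} (h : 0 < prE p E) :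
    ∃ ω, 0 < p ω ∧ E ω := by
  by_contra hc
  push_neg at hc
  have : prE p E = 0 := Finset.sum_eq_zero fun ω _ => by
    by_cases hE : E ω
    · have := hc ω
      have h0 : p ω ≤ 0 := by by_contra h'; exact absurd hE (by simpa using this (lt_of_not_ge h'))
      simp [hE, le_antisymm h0 (hp ω)]
    · simp [hE]
  simp [this] at h

lemma sum_pr (hp : IsPMF p) (Z : Ω → β) : ∑ b, pr p Z b = 1 := by
  classical
  unfold pr prE
  rw [Finset.sum_comm]
  rw [← hp.2]
  refine Finset.sum_congr rfl fun ω _ => ?_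
  simp

set_option linter.unusedSectionVars false

lemma pr_comp (f : β → γ) (Z : Ω → β) (c : γ) :
    pr p (fun ω => f (Z ω)) c = ∑ b, if f b = c then pr p Z b else 0 := by
  classical
  symm
  calc ∑ b, (if f b = c then pr p Z b else 0)
      = ∑ b, ∑ ω, (if Z ω = b ∧ f b = c then p ω else 0) := by
        refine Finset.sum_congr rfl fun b _ => ?_
        by_cases h : f b = c
        · simp [h, pr, prE]
        · simp [h]
    _ = ∑ ω, ∑ b, (if Z ω = b ∧ f b = c then p ω else 0) := Finset.sum_comm
    _ = ∑ ω, (if f (Z ω) = c then p ω else 0) := by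
        refine Finset.sum_congr rfl fun ω _ => ?_
        rw [Finset.sum_eq_single (Z ω)]
        · simp
        · intro b _ hb; rw [if_neg]; rintro ⟨h1, -⟩; exact hb h1.symm
        · intro h; exact absurd (Finset.mem_univ _) h
    _ = pr p (fun ω => f (Z ω)) c := rfl

end Helpers

section Main
set_option linter.unusedSectionVars false
variable {Ω β γ : Type*} [Fintype Ω] [Fintype β] [Fintype γ] {p : Ω → ℝ}

lemma pr_le_pr_comp (hp : ∀ ω, 0 ≤ p ω) (f : β → γ) (Z : Ω → β) (b : β) :
    pr p Z b ≤ pr p (fun ω => f (Z ω)) (f b) := by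
  classical
  conv_rhs => rw [pr_comp]
  have h := Finset.single_le_sum (f := fun b' => if f b' = f b then pr p Z b' else 0)
    (fun i _ => by by_cases h : f i = f b <;> simp [h, pr_nonneg hp]) (Finset.mem_univ b)
  simpa using h

lemma sum_pr_mul_comp (f : β → γ) (Z : Ω → β) (g : γ → ℝ) :
    ∑ b, pr p Z b * g (f b) = ∑ c, pr p (fun ω => f (Z ω)) c * g c := by
  classical
  symm
  calc ∑ c, pr p (fun ω => f (Z ω)) c * g c
      = ∑ c, ∑ b, (if f b = c then pr p Z b * g c else 0) := by
        refine Finset.sum_congr rfl fun c _ => ?_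
        rw [pr_comp, Finset.sum_mul]
        refine Finset.sum_congr rfl fun b _ => ?_
        by_cases h : f b = c <;> simp [h]
    _ = ∑ b, ∑ c, (if f b = c then pr p Z b * g c else 0) := Finset.sum_comm
    _ = ∑ b, pr p Z b * g (f b) := by
        refine Finset.sum_congr rfl fun b _ => ?_
        rw [Finset.sum_eq_single (f b)]
        · simp
        · intro c _ hc; rw [if_neg (fun h => hc h.symm)]
        · intro h; exact absurd (Finset.mem_univ _) h

lemma entL_comp_le (hp : ∀ ω, 0 ≤ p ω) (f : β → γ) (Z : Ω → β) :
    entL p (fun ω => f (Z ω)) ≤ entL p Z := by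
  unfold entL
  rw [neg_le_neg_iff]
  calc ∑ b, pr p Z b * Real.log (pr p Z b)
      ≤ ∑ b, pr p Z b * Real.log (pr p (fun ω => f (Z ω)) (f b)) := by
        refine Finset.sum_le_sum fun b _ => ?_
        rcases eq_or_lt_of_le (pr_nonneg hp Z b) with h | h
        · simp [← h]
        · exact mul_le_mul_of_nonneg_left
            (Real.log_le_log h (pr_le_pr_comp hp f Z b)) h.le
    _ = ∑ c, pr p (fun ω => f (Z ω)) c * Real.log (pr p (fun ω => f (Z ω)) c) :=
        sum_pr_mul_comp (p := p) f Z (fun c => Real.log (pr p (fun ω => f (Z ω)) c))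

lemma pr_fst (V : Ω → β) (Z : Ω → γ) (b : β) :
    pr p V b = ∑ c, pr p (fun ω => (V ω, Z ω)) (b, c) := by
  classical
  unfold pr prE
  rw [Finset.sum_comm]
  refine Finset.sum_congr rfl fun ω _ => ?_
  rw [Finset.sum_eq_single (Z ω)]
  · simp [Prod.ext_iff]
  · intro c _ hc
    rw [if_neg]
    rintro h
    exact hc (congrArg Prod.snd h).symm
  · intro h; exact absurd (Finset.mem_univ _) h

lemma pr_snd (V : Ω → β) (Z : Ω → γ) (c : γ) :
    pr p Z c = ∑ b, pr p (fun ω => (V ω, Z ω)) (b, c) := by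
  classical
  unfold pr prE
  rw [Finset.sum_comm]
  refine Finset.sum_congr rfl fun ω _ => ?_
  rw [Finset.sum_eq_single (V ω)]
  · simp [Prod.ext_iff]
  · intro b _ hb
    rw [if_neg]
    rintro h
    exact hb (congrArg Prod.fst h).symm
  · intro h; exact absurd (Finset.mem_univ _) h

lemma pr_pair_le_fst (hp : ∀ ω, 0 ≤ p ω) (V : Ω → β) (Z : Ω → γ) (b : β) (c : γ) :
    pr p (fun ω => (V ω, Z ω)) (b, c) ≤ pr p V b := by
  rw [pr_fst V Z b]
  exact Finset.single_le_sum (f := fun c' => pr p (fun ω => (V ω, Z ω)) (b, c'))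
    (fun c' _ => pr_nonneg hp _ _) (Finset.mem_univ c)

lemma pr_pair_le_snd (hp : ∀ ω, 0 ≤ p ω) (V : Ω → β) (Z : Ω → γ) (b : β) (c : γ) :
    pr p (fun ω => (V ω, Z ω)) (b, c) ≤ pr p Z c := by
  rw [pr_snd V Z c]
  exact Finset.single_le_sum (f := fun b' => pr p (fun ω => (V ω, Z ω)) (b', c))
    (fun b' _ => pr_nonneg hp _ _) (Finset.mem_univ b)

lemma sum_pair_mul_fst (A : Ω → β) (B : Ω → γ) (g : β → ℝ) :
    ∑ z : β × γ, pr p (fun ω => (A ω, B ω)) z * g z.1 = ∑ b, pr p A b * g b := by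
  rw [Fintype.sum_prod_type]
  refine Finset.sum_congr rfl fun b _ => ?_
  rw [pr_fst A B b, Finset.sum_mul]

lemma sum_pair_mul_snd (A : Ω → β) (B : Ω → γ) (g : γ → ℝ) :
    ∑ z : β × γ, pr p (fun ω => (A ω, B ω)) z * g z.2 = ∑ c, pr p B c * g c := by
  rw [Fintype.sum_prod_type, Finset.sum_comm]
  refine Finset.sum_congr rfl fun c _ => ?_
  rw [pr_snd A B c, Finset.sum_mul]

/-- Key identity: `H(A) + H(B) - H(A,B) = -∑ P(ab) (log PA + log PB - log P(ab))`. -/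
lemma entL_identity (A : Ω → β) (B : Ω → γ) :
    entL p A + entL p B - entL p (fun ω => (A ω, B ω)) =
      -∑ z : β × γ, pr p (fun ω => (A ω, B ω)) z *
        (Real.log (pr p A z.1) + Real.log (pr p B z.2)
          - Real.log (pr p (fun ω => (A ω, B ω)) z)) := by
  have hA : entL p A = -∑ z : β × γ,
      pr p (fun ω => (A ω, B ω)) z * Real.log (pr p A z.1) := by
    unfold entL
    rw [sum_pair_mul_fst A B (fun a => Real.log (pr p A a))]
  have hB : entL p B = -∑ z : β × γ,
      pr p (fun ω => (A ω, B ω)) z * Real.log (pr p B z.2) := by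
    unfold entL
    rw [sum_pair_mul_snd A B (fun c => Real.log (pr p B c))]
  rw [hA, hB]
  unfold entL
  rw [show ∀ a b c : ℝ, -a + -b - -c = -(a + b - c) from fun a b c => by ring]
  congr 1
  rw [← Finset.sum_add_distrib, ← Finset.sum_sub_distrib]
  refine Finset.sum_congr rfl fun z _ => by ring


/-- Termwise bound used in subadditivity. -/
lemma term_le (hp : ∀ ω, 0 ≤ p ω) (A : Ω → β) (B : Ω → γ) (z : β × γ) :
    pr p (fun ω => (A ω, B ω)) z *
        (Real.log (pr p A z.1) + Real.log (pr p B z.2)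
          - Real.log (pr p (fun ω => (A ω, B ω)) z))
      ≤ pr p A z.1 * pr p B z.2 - pr p (fun ω => (A ω, B ω)) z := by
  obtain ⟨a, b⟩ := z
  set P := pr p (fun ω => (A ω, B ω)) (a, b) with hP
  rcases eq_or_lt_of_le (pr_nonneg hp (fun ω => (A ω, B ω)) (a, b)) with h | h
  · rw [← hP] at h
    rw [← h]
    simpa using mul_nonneg (pr_nonneg hp A a) (pr_nonneg hp B b)
  · have hPA : 0 < pr p A a := lt_of_lt_of_le h (pr_pair_le_fst hp A B a b)
    have hPB : 0 < pr p B b := lt_of_lt_of_le h (pr_pair_le_snd hp A B a b)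
    have ht : 0 < pr p A a * pr p B b / P := div_pos (mul_pos hPA hPB) h
    have hlog : Real.log (pr p A a) + Real.log (pr p B b) - Real.log P
        = Real.log (pr p A a * pr p B b / P) := by
      rw [Real.log_div (by positivity) (ne_of_gt h), Real.log_mul (ne_of_gt hPA) (ne_of_gt hPB)]
    have hb := Real.log_le_sub_one_of_pos ht
    calc P * (Real.log (pr p A a) + Real.log (pr p B b) - Real.log P)
        = P * Real.log (pr p A a * pr p B b / P) := by rw [hlog]
      _ ≤ P * (pr p A a * pr p B b / P - 1) := by
          exact mul_le_mul_of_nonneg_left hb h.le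
      _ = pr p A a * pr p B b - P := by
          rw [mul_sub, mul_div_assoc', mul_div_cancel_left₀ _ (ne_of_gt h : P ≠ 0), mul_one]
  
lemma sum_term_rhs (hp : IsPMF p) (A : Ω → β) (B : Ω → γ) :
    ∑ z : β × γ, (pr p A z.1 * pr p B z.2 - pr p (fun ω => (A ω, B ω)) z) = 0 := by
  rw [Finset.sum_sub_distrib]
  have h1 : ∑ z : β × γ, pr p A z.1 * pr p B z.2 = 1 := by
    rw [Fintype.sum_prod_type]
    calc ∑ a, ∑ b, pr p A a * pr p B b = ∑ a, pr p A a * ∑ b, pr p B b := by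
          refine Finset.sum_congr rfl fun a _ => (Finset.mul_sum _ _ _).symm
      _ = 1 := by rw [sum_pr hp B]; simpa using sum_pr hp A
  rw [h1, sum_pr hp (fun ω => (A ω, B ω))]
  ring

/-- Subadditivity. -/
lemma entL_pair_le (hp : IsPMF p) (A : Ω → β) (B : Ω → γ) :
    entL p (fun ω => (A ω, B ω)) ≤ entL p A + entL p B := by
  have key : 0 ≤ entL p A + entL p B - entL p (fun ω => (A ω, B ω)) := by
    rw [entL_identity, neg_nonneg]
    calc ∑ z : β × γ, pr p (fun ω => (A ω, B ω)) z *
          (Real.log (pr p A z.1) + Real.log (pr p B z.2)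
            - Real.log (pr p (fun ω => (A ω, B ω)) z))
        ≤ ∑ z : β × γ, (pr p A z.1 * pr p B z.2 - pr p (fun ω => (A ω, B ω)) z) :=
          Finset.sum_le_sum fun z _ => term_le hp.1 A B z
      _ = 0 := sum_term_rhs hp A B
  linarith

/-- Equality in subadditivity forces independence. -/
lemma indep_of_entL_add (hp : IsPMF p) (A : Ω → β) (B : Ω → γ)
    (h : entL p A + entL p B - entL p (fun ω => (A ω, B ω)) = 0) :
    ∀ a b, pr p (fun ω => (A ω, B ω)) (a, b) = pr p A a * pr p B b := by
  have hsum : ∑ z : β × γ, pr p (fun ω => (A ω, B ω)) z *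
      (Real.log (pr p A z.1) + Real.log (pr p B z.2)
        - Real.log (pr p (fun ω => (A ω, B ω)) z))
      = ∑ z : β × γ, (pr p A z.1 * pr p B z.2 - pr p (fun ω => (A ω, B ω)) z) := by
    have h1 := entL_identity (p := p) A B
    rw [h] at h1
    have h2 : ∑ z : β × γ, pr p (fun ω => (A ω, B ω)) z *
        (Real.log (pr p A z.1) + Real.log (pr p B z.2)
          - Real.log (pr p (fun ω => (A ω, B ω)) z)) = 0 := by linarith
    rw [h2]
    exact (sum_term_rhs hp A B).symm
  have heach := (Finset.sum_eq_sum_iff_of_le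
    (fun z _ => term_le hp.1 A B z)).mp hsum
  intro a b
  have hz := heach (a, b) (Finset.mem_univ _)
  set P := pr p (fun ω => (A ω, B ω)) (a, b) with hPdef
  rcases eq_or_lt_of_le (pr_nonneg hp.1 (fun ω => (A ω, B ω)) (a, b)) with hc | hc
  · rw [← hPdef] at hc
    rw [← hc] at hz ⊢
    simp only [zero_mul, mul_zero, sub_zero] at hz
    simp only [← hz]
  · have hPA : 0 < pr p A a := lt_of_lt_of_le hc (pr_pair_le_fst hp.1 A B a b)
    have hPB : 0 < pr p B b := lt_of_lt_of_le hc (pr_pair_le_snd hp.1 A B a b)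
    have ht : 0 < pr p A a * pr p B b / P := div_pos (mul_pos hPA hPB) hc
    have hlog : Real.log (pr p A a) + Real.log (pr p B b) - Real.log P
        = Real.log (pr p A a * pr p B b / P) := by
      rw [Real.log_div (by positivity) (ne_of_gt hc), Real.log_mul (ne_of_gt hPA) (ne_of_gt hPB)]
    rw [hlog] at hz
    by_contra hne
    have ht1 : pr p A a * pr p B b / P ≠ 1 := by
      intro h1
      exact hne ((div_eq_one_iff_eq (ne_of_gt hc : P ≠ 0)).mp h1).symm
    have := Real.log_lt_sub_one_of_pos ht ht1
    have h2 : P * Real.log (pr p A a * pr p B b / P)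
        < P * (pr p A a * pr p B b / P - 1) := by
      exact (mul_lt_mul_iff_right₀ hc).mpr this
    rw [hz] at h2
    have h3 : P * (pr p A a * pr p B b / P - 1) = pr p A a * pr p B b - P := by
      rw [mul_sub, mul_div_assoc', mul_div_cancel_left₀ _ (ne_of_gt hc : P ≠ 0), mul_one]
    rw [h3] at h2
    exact lt_irrefl _ h2


lemma pr_pos_exists (hp : ∀ ω, 0 ≤ p ω) {Z : Ω → β} {b : β} (h : 0 < pr p Z b) :
    ∃ ω, 0 < p ω ∧ Z ω = b := prE_pos_exists hp h

lemma p_le_pr (hp : ∀ ω, 0 ≤ p ω) (Z : Ω → β) (ω : Ω) : p ω ≤ pr p Z (Z ω) :=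
  le_prE hp rfl

/-- If the second component is a.s. determined by the first, pairing does not
change the entropy. -/
lemma entL_pair_of_det (hp : ∀ ω, 0 ≤ p ω) (V : Ω → β) (Z : Ω → γ)
    (h : ∀ ω ω', 0 < p ω → 0 < p ω' → V ω = V ω' → Z ω = Z ω') :
    entL p (fun ω => (V ω, Z ω)) = entL p V := by
  classical
  unfold entL
  rw [Fintype.sum_prod_type]
  congr 1
  refine Finset.sum_congr rfl fun b _ => ?_
  -- at most one c with positive mass
  have huniq : ∀ c c', pr p (fun ω => (V ω, Z ω)) (b, c) ≠ 0 →
      pr p (fun ω => (V ω, Z ω)) (b, c') ≠ 0 → c = c' := by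
    intro c c' hc hc'
    obtain ⟨ω, hω, hVZ⟩ := pr_pos_exists hp
      (lt_of_le_of_ne (pr_nonneg hp _ _) (Ne.symm hc))
    obtain ⟨ω', hω', hVZ'⟩ := pr_pos_exists hp
      (lt_of_le_of_ne (pr_nonneg hp _ _) (Ne.symm hc'))
    have h1 : V ω = b := congrArg Prod.fst hVZ
    have h2 : Z ω = c := congrArg Prod.snd hVZ
    have h1' : V ω' = b := congrArg Prod.fst hVZ'
    have h2' : Z ω' = c' := congrArg Prod.snd hVZ'
    have hV : V ω = V ω' := by rw [h1, h1']
    rw [← h2, ← h2', h ω ω' hω hω' hV]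
  have hmarg : pr p V b = ∑ c, pr p (fun ω => (V ω, Z ω)) (b, c) := pr_fst V Z b
  by_cases hall : ∀ c, pr p (fun ω => (V ω, Z ω)) (b, c) = 0
  · rw [hmarg]
    simp [hall]
  · push_neg at hall
    obtain ⟨c0, hc0⟩ := hall
    have hsingle : ∑ c, pr p (fun ω => (V ω, Z ω)) (b, c)
        = pr p (fun ω => (V ω, Z ω)) (b, c0) := by
      rw [Finset.sum_eq_single c0]
      · intro c _ hc
        by_contra hne
        exact hc (huniq c c0 hne hc0)
      · intro hm; exact absurd (Finset.mem_univ _) hm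
    rw [Finset.sum_eq_single c0, hmarg, hsingle]
    · intro c _ hc
      have : pr p (fun ω => (V ω, Z ω)) (b, c) = 0 := by
        by_contra hne
        exact hc (huniq c c0 hne hc0)
      simp [this]
    · intro hm; exact absurd (Finset.mem_univ _) hm

/-- Zero conditional entropy means a.s. determinism. -/
lemma det_of_entL_pair_eq (hp : IsPMF p) (V : Ω → β) (Z : Ω → γ)
    (h : entL p (fun ω => (V ω, Z ω)) = entL p V) :
    ∀ ω ω', 0 < p ω → 0 < p ω' → V ω = V ω' → Z ω = Z ω' := by
  classical
  have hid : ∑ z : β × γ, pr p (fun ω => (V ω, Z ω)) z *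
      (Real.log (pr p V z.1) - Real.log (pr p (fun ω => (V ω, Z ω)) z)) = 0 := by
    have hV : entL p V = -∑ z : β × γ,
        pr p (fun ω => (V ω, Z ω)) z * Real.log (pr p V z.1) := by
      unfold entL
      rw [sum_pair_mul_fst V Z (fun a => Real.log (pr p V a))]
    have hpair : entL p (fun ω => (V ω, Z ω)) = -∑ z : β × γ,
        pr p (fun ω => (V ω, Z ω)) z * Real.log (pr p (fun ω => (V ω, Z ω)) z) := rfl
    have hh := h
    rw [hV, hpair] at hh
    have hsplit : ∑ z : β × γ, pr p (fun ω => (V ω, Z ω)) z *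
        (Real.log (pr p V z.1) - Real.log (pr p (fun ω => (V ω, Z ω)) z))
        = ∑ z : β × γ, pr p (fun ω => (V ω, Z ω)) z * Real.log (pr p V z.1)
          - ∑ z : β × γ, pr p (fun ω => (V ω, Z ω)) z
              * Real.log (pr p (fun ω => (V ω, Z ω)) z) := by
      rw [← Finset.sum_sub_distrib]
      exact Finset.sum_congr rfl fun z _ => by ring
    rw [hsplit]
    linarith
  have hnonneg : ∀ z : β × γ, 0 ≤ pr p (fun ω => (V ω, Z ω)) z *
      (Real.log (pr p V z.1) - Real.log (pr p (fun ω => (V ω, Z ω)) z)) := by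
    intro z
    rcases eq_or_lt_of_le (pr_nonneg hp.1 (fun ω => (V ω, Z ω)) z) with hc | hc
    · rw [← hc]; simp
    · refine mul_nonneg hc.le (sub_nonneg.mpr (Real.log_le_log hc ?_))
      obtain ⟨b, c⟩ := z
      exact pr_pair_le_fst hp.1 V Z b c
  have heach := (Finset.sum_eq_zero_iff_of_nonneg fun z _ => hnonneg z).mp hid
  intro ω ω' hω hω' hVeq
  have key : ∀ ω0, 0 < p ω0 → V ω0 = V ω →
      pr p (fun ω1 => (V ω1, Z ω1)) (V ω, Z ω0) = pr p V (V ω) := by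
    intro ω0 hω0 hV0
    have hle : p ω0 ≤ pr p (fun ω1 => (V ω1, Z ω1)) (V ω, Z ω0) := by
      have := p_le_pr hp.1 (fun ω1 => (V ω1, Z ω1)) ω0
      rwa [hV0] at this
    have hPpos : 0 < pr p (fun ω1 => (V ω1, Z ω1)) (V ω, Z ω0) := lt_of_lt_of_le hω0 hle
    have hPVpos : 0 < pr p V (V ω) :=
      lt_of_lt_of_le hPpos (pr_pair_le_fst hp.1 V Z (V ω) (Z ω0))
    have hz := heach (V ω, Z ω0) (Finset.mem_univ _)
    rcases mul_eq_zero.mp hz with h0 | h0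
    · exact absurd h0 (ne_of_gt hPpos)
    · have hlogeq : Real.log (pr p V (V ω))
          = Real.log (pr p (fun ω1 => (V ω1, Z ω1)) (V ω, Z ω0)) := by
        have : Real.log (pr p V ((V ω, Z ω0).1))
            - Real.log (pr p (fun ω1 => (V ω1, Z ω1)) (V ω, Z ω0)) = 0 := h0
        simpa using sub_eq_zero.mp this
      calc pr p (fun ω1 => (V ω1, Z ω1)) (V ω, Z ω0)
          = Real.exp (Real.log (pr p (fun ω1 => (V ω1, Z ω1)) (V ω, Z ω0))) :=
            (Real.exp_log hPpos).symm
        _ = Real.exp (Real.log (pr p V (V ω))) := by rw [hlogeq]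
        _ = pr p V (V ω) := Real.exp_log hPVpos
  by_contra hne
  have k1 := key ω hω rfl
  have k2 := key ω' hω' hVeq.symm
  have hPVpos : 0 < pr p V (V ω) := by
    have hle : p ω ≤ pr p (fun ω1 => (V ω1, Z ω1)) (V ω, Z ω) :=
      p_le_pr hp.1 (fun ω1 => (V ω1, Z ω1)) ω
    have := pr_pair_le_fst hp.1 V Z (V ω) (Z ω)
    linarith
  have hsum : pr p (fun ω1 => (V ω1, Z ω1)) (V ω, Z ω)
      + pr p (fun ω1 => (V ω1, Z ω1)) (V ω, Z ω')
      ≤ ∑ c, pr p (fun ω1 => (V ω1, Z ω1)) (V ω, c) := by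
    have hsub : ({Z ω, Z ω'} : Finset γ) ⊆ Finset.univ := Finset.subset_univ _
    have := Finset.sum_le_sum_of_subset_of_nonneg hsub
      (fun c _ _ => pr_nonneg hp.1 (fun ω1 => (V ω1, Z ω1)) (V ω, c))
    rwa [Finset.sum_pair hne] at this
  rw [← pr_fst V Z (V ω), k1, k2] at hsum
  linarith


/-- Independence makes entropy additive. -/
lemma entL_pair_of_indep (hp : IsPMF p) (A : Ω → β) (B : Ω → γ)
    (h : ∀ a b, pr p (fun ω => (A ω, B ω)) (a, b) = pr p A a * pr p B b) :
    entL p (fun ω => (A ω, B ω)) = entL p A + entL p B := by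
  have hzero : entL p A + entL p B - entL p (fun ω => (A ω, B ω)) = 0 := by
    rw [entL_identity, neg_eq_zero]
    refine Finset.sum_eq_zero fun z _ => ?_
    obtain ⟨a, b⟩ := z
    rw [h a b]
    rcases eq_or_lt_of_le (pr_nonneg hp.1 A a) with hA | hA
    · rw [← hA]; simp
    rcases eq_or_lt_of_le (pr_nonneg hp.1 B b) with hB | hB
    · rw [← hB]; simp
    rw [Real.log_mul (ne_of_gt hA) (ne_of_gt hB)]
    simp
  linarith

lemma prE_decomp (Z : Ω → β) (E : Ω → Prop) :
    prE p E = ∑ b, prE p (fun ω => E ω ∧ Z ω = b) := by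
  classical
  unfold prE
  rw [Finset.sum_comm]
  refine Finset.sum_congr rfl fun ω _ => ?_
  rw [Finset.sum_eq_single (Z ω)]
  · by_cases h : E ω <;> simp [h]
  · intro b _ hb
    rw [if_neg]
    rintro ⟨-, h2⟩
    exact hb h2.symm
  · intro h; exact absurd (Finset.mem_univ _) h

lemma prE_pCond (E F : Ω → Prop) :
    prE (pCond p E) F = prE p (fun ω => F ω ∧ E ω) / prE p E := by
  unfold prE pCond
  rw [Finset.sum_div]
  refine Finset.sum_congr rfl fun ω _ => ?_
  by_cases hF : F ω <;> by_cases hE : E ω <;> simp [hF, hE, prE]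

lemma pr_pCond (E : Ω → Prop) (Z : Ω → β) (b : β) :
    pr (pCond p E) Z b = prE p (fun ω => Z ω = b ∧ E ω) / prE p E :=
  prE_pCond E _

lemma isPMF_pCond (hp : IsPMF p) {E : Ω → Prop} (h : 0 < prE p E) :
    IsPMF (pCond p E) := by
  constructor
  · intro ω
    unfold pCond
    by_cases hE : E ω
    · simp only [hE, if_true]
      exact div_nonneg (hp.1 ω) h.le
    · simp [hE]
  · have : ∑ ω, pCond p E ω = (∑ ω, if E ω then p ω else 0) / prE p E := by
      rw [Finset.sum_div]
      refine Finset.sum_congr rfl fun ω _ => ?_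
      unfold pCond
      by_cases hE : E ω <;> simp [hE]
    rw [this]
    exact div_self (ne_of_gt h)

lemma pCond_pos (hp : ∀ ω, 0 ≤ p ω) {E : Ω → Prop} {ω : Ω}
    (h : 0 < pCond p E ω) : 0 < p ω ∧ E ω := by
  unfold pCond at h
  by_cases hE : E ω
  · rw [if_pos hE] at h
    refine ⟨?_, hE⟩
    rcases eq_or_lt_of_le (hp ω) with h1 | h1
    · rw [← h1] at h
      simp at h
    · exact h1
  · rw [if_neg hE] at h
    exact absurd h (lt_irrefl 0)

lemma ent_eq_entL (Z : Ω → β) : ent p Z = entL p Z / Real.log 2 := by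
  unfold ent entL Real.logb
  rw [neg_div, Finset.sum_div]
  congr 1
  exact Finset.sum_congr rfl fun b _ => (mul_div_assoc _ _ _).symm

lemma entCondOn_eq (Z : Ω → β) (E : Ω → Prop) :
    entCondOn p Z E = ent (pCond p E) Z := by
  unfold entCondOn ent
  congr 1
  refine Finset.sum_congr rfl fun b _ => ?_
  rw [pr_pCond]

lemma entL_congr_pr {Ω' : Type*} [Fintype Ω'] {p' : Ω' → ℝ} {Z : Ω → β} {Z' : Ω' → β}
    (h : ∀ b, pr p Z b = pr p' Z' b) : entL p Z = entL p' Z' := by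
  unfold entL
  congr 1
  exact Finset.sum_congr rfl fun b _ => by rw [h b]

end Main


set_option maxHeartbeats 2000000 in
/-- Converse (Theorem 2): with W ⟂ (X, Y), I(U; X) = 0 and
H(Y_{d_1},…,Y_{d_K} | W, U) = 0, we get H(U) ≥ H(Y_{d_1},…,Y_{d_K} | X = x)
for every x with P(X = x) > 0. -/
theorem stmt9 {Ω αX γW γU : Type*} [Fintype Ω] [Fintype αX] [Fintype γW] [Fintype γU]
    {K : ℕ} {Yalph : Fin K → Type*} [∀ i, Fintype (Yalph i)]
    (p : Ω → ℝ) (hp : IsPMF p) (X : Ω → αX) (Y : ∀ i, Ω → Yalph i)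
    (W : Ω → γW) (U : Ω → γU)
    (hW : IndepRV p W (fun ω => (X ω, fun i => Y i ω)))
    (hpriv : mi p U X = 0)
    (hdec : condEnt p (fun ω => fun i => Y i ω) (fun ω => (W ω, U ω)) = 0) :
    ∀ x : αX, 0 < pr p X x →
      entCondOn p (fun ω => fun i => Y i ω) (fun ω => X ω = x) ≤ ent p U := by
  intro x hx
  classical
  have hlog2 : (0:ℝ) < Real.log 2 := Real.log_pos one_lt_two
  set Yv : Ω → (∀ i, Yalph i) := fun ω => fun i => Y i ω with hYv
  set E : Ω → Prop := fun ω => X ω = x with hEdef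
  have hc : 0 < prE p E := hx
  set q : Ω → ℝ := pCond p E with hqdef
  have hq : IsPMF q := isPMF_pCond hp hc
  -- U and X are independent
  have hUX : ∀ u x', pr p (fun ω => (U ω, X ω)) (u, x') = pr p U u * pr p X x' := by
    apply indep_of_entL_add hp
    have h1 := ent_eq_entL (p := p) U
    have h2 := ent_eq_entL (p := p) X
    have h3 := ent_eq_entL (p := p) (fun ω => (U ω, X ω))
    unfold mi at hpriv
    rw [h1, h2, h3] at hpriv
    field_simp at hpriv
    linarith
  -- pr of U is unchanged under conditioning on E
  have hprU : ∀ u, pr q U u = pr p U u := by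
    intro u
    rw [hqdef, pr_pCond]
    have hev : prE p (fun ω => U ω = u ∧ E ω) = pr p (fun ω => (U ω, X ω)) (u, x) := by
      apply prE_congr
      intro ω
      simp [hEdef, Prod.ext_iff]
    rw [hev, hUX u x]
    have hXx : pr p X x = prE p E := rfl
    rw [hXx, mul_div_assoc, div_self (ne_of_gt hc), mul_one]
  -- determinism: (W,U) determines Yv on the support of p
  have hdetp : ∀ ω ω', 0 < p ω → 0 < p ω' → (W ω, U ω) = (W ω', U ω') → Yv ω = Yv ω' := by
    apply det_of_entL_pair_eq hp (fun ω => (W ω, U ω)) Yv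
    unfold condEnt at hdec
    have h1 := ent_eq_entL (p := p) (fun ω => ((W ω, U ω), Yv ω))
    have h2 := ent_eq_entL (p := p) (fun ω => (W ω, U ω))
    rw [h1, h2] at hdec
    field_simp at hdec
    linarith
  have hdetq : ∀ ω ω', 0 < q ω → 0 < q ω' → (W ω, U ω) = (W ω', U ω') → Yv ω = Yv ω' :=
    fun ω ω' h1 h2 h3 => hdetp ω ω' (pCond_pos hp.1 h1).1 (pCond_pos hp.1 h2).1 h3
  -- W and Yv are independent under q
  have hprW : ∀ w, pr q W w = pr p W w := by
    intro w
    rw [hqdef, pr_pCond]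
    have hdec2 : prE p (fun ω => W ω = w ∧ E ω)
        = ∑ y', prE p (fun ω => (W ω = w ∧ E ω) ∧ Yv ω = y') := prE_decomp Yv _
    have heach : ∀ y', prE p (fun ω => (W ω = w ∧ E ω) ∧ Yv ω = y')
        = pr p W w * pr p (fun ω => (X ω, Yv ω)) (x, y') := by
      intro y'
      rw [show prE p (fun ω => (W ω = w ∧ E ω) ∧ Yv ω = y')
          = prE p (fun ω => W ω = w ∧ (X ω, Yv ω) = (x, y')) from
        prE_congr fun ω => by simp [hEdef, Prod.ext_iff]; tauto]
      exact hW w (x, y')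
    rw [hdec2, Finset.sum_congr rfl fun y' _ => heach y', ← Finset.mul_sum,
      ← pr_fst X Yv x]
    have hXx : pr p X x = prE p E := rfl
    rw [hXx, mul_div_assoc, div_self (ne_of_gt hc), mul_one]
  have hWYq : ∀ w y, pr q (fun ω => (W ω, Yv ω)) (w, y) = pr q W w * pr q Yv y := by
    intro w y
    rw [hprW]
    rw [hqdef, pr_pCond, pr_pCond]
    have hkey : prE p (fun ω => (W ω, Yv ω) = (w, y) ∧ E ω)
        = pr p W w * prE p (fun ω => Yv ω = y ∧ E ω) := by
      rw [show prE p (fun ω => (W ω, Yv ω) = (w, y) ∧ E ω)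
          = prE p (fun ω => W ω = w ∧ (X ω, Yv ω) = (x, y)) from
        prE_congr fun ω => by simp [hEdef, Prod.ext_iff]; tauto]
      rw [hW w (x, y)]
      congr 1
      apply prE_congr
      intro ω
      simp [hEdef, Prod.ext_iff]
      tauto
    rw [hkey, mul_div_assoc]
  have hent_add : entL q (fun ω => (W ω, Yv ω)) = entL q W + entL q Yv :=
    entL_pair_of_indep hq W Yv hWYq
  have hmono : entL q (fun ω => (W ω, Yv ω)) ≤ entL q (fun ω => ((W ω, U ω), Yv ω)) :=
    entL_comp_le hq.1 (fun z => (z.1.1, z.2)) (fun ω => ((W ω, U ω), Yv ω))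
  have hdet_ent : entL q (fun ω => ((W ω, U ω), Yv ω)) = entL q (fun ω => (W ω, U ω)) :=
    entL_pair_of_det hq.1 _ Yv hdetq
  have hsub : entL q (fun ω => (W ω, U ω)) ≤ entL q W + entL q U := entL_pair_le hq W U
  have hqU : entL q U = entL p U := entL_congr_pr hprU
  have hfinal : entL q Yv ≤ entL p U := by linarith
  rw [entCondOn_eq, ← hqdef, ent_eq_entL, ent_eq_entL]
  exact (div_le_div_iff_of_pos_right hlog2).mpr hfinal
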